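/- arXiv:1908.04712 — 3 statements merged into one kernel-verified Lean document; each statement's English description precedes it below -/
import Mathlib

section
/- Let A be an n×n real matrix and let n⃗ ∈ ℝⁿ be a unit vector. The function ξ_Γ(t) := det(1 + t·A) · ‖((1 + t·A)⁻¹)ᵀ n⃗‖, defined for |t| small enough that 1 + t·A is invertible, is differentiable at t = 0 with derivative ξ_Γ′(0) = trace(A) − ⟨n⃗, A n⃗⟩. In particular, for A = DV(x) and n⃗ the outward unit normal, ξ_Γ′(0) equals the tangential divergence div_Γ V := div V − n⃗ᵀ (DV) n⃗. -/
open Matrix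

attribute [local instance] Matrix.linftyOpNormedRing Matrix.linftyOpNormedAlgebra

/-- Multiplication of a matrix with a vector of `EuclideanSpace ℝ (Fin n)`. -/
noncomputable def mulVecE {n : ℕ} (A : Matrix (Fin n) (Fin n) ℝ)
    (v : EuclideanSpace ℝ (Fin n)) : EuclideanSpace ℝ (Fin n) :=
  WithLp.toLp 2 (A.mulVec v)

/-- For a unit vector `n⃗`, the surface element
`ξ_Γ(t) = det(1 + t•A) · ‖((1 + t•A)⁻¹)ᵀ n⃗‖` is differentiable at `t = 0` with derivative
`trace A - ⟪n⃗, A n⃗⟫`, i.e. the tangential divergence `div_Γ V = div V - n⃗ᵀ(DV)n⃗` when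
`A = DV(x)`. -/
theorem surface_element_hasDerivAt_tangentialDivergence (n : ℕ)
    (A : Matrix (Fin n) (Fin n) ℝ) (v : EuclideanSpace ℝ (Fin n)) (hv : ‖v‖ = 1) :
    HasDerivAt (fun t : ℝ => (1 + t • A).det * ‖mulVecE ((1 + t • A)⁻¹)ᵀ v‖)
      (A.trace - (inner ℝ v (mulVecE A v) : ℝ)) 0 := by
  -- derivative of the determinant
  have hdet : HasDerivAt (fun t : ℝ => (1 + t • A).det) A.trace 0 := by
    have hfun : (fun t : ℝ => (1 + t • A).det) = fun t : ℝ =>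
        1 + A.trace * t +
          ((1 + (Polynomial.X : Polynomial ℝ) • A.map Polynomial.C).det).divX.divX.eval t
            * t ^ 2 :=
      funext fun t => Matrix.det_one_add_smul t A
    rw [hfun]
    have h := ((hasDerivAt_const (0:ℝ) (1:ℝ)).add
        ((hasDerivAt_id (0:ℝ)).const_mul A.trace)).add
      ((((1 + (Polynomial.X : Polynomial ℝ) • A.map Polynomial.C).det).divX.divX.hasDerivAt
          (0:ℝ)).mul (hasDerivAt_pow 2 (0:ℝ)))
    simp only [Pi.add_def, Pi.mul_def] at h
    simpa using h
  -- derivative of the matrix inverse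
  have hM : HasDerivAt (fun t : ℝ => (1 : Matrix (Fin n) (Fin n) ℝ) + t • A) A 0 := by
    have h := ((hasDerivAt_id (0:ℝ)).smul_const A).const_add (1 : Matrix (Fin n) (Fin n) ℝ)
    simp only [one_smul, id] at h
    exact h
  have hinv0 := hasFDerivAt_ringInverse (𝕜 := ℝ) (1 : (Matrix (Fin n) (Fin n) ℝ)ˣ)
  rw [show ((1 : (Matrix (Fin n) (Fin n) ℝ)ˣ) : Matrix (Fin n) (Fin n) ℝ)
      = 1 + (0:ℝ) • A by simp] at hinv0
  have hinv : HasDerivAt (fun t : ℝ => (1 + t • A)⁻¹) (-A) 0 := by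
    simp only [Matrix.nonsing_inv_eq_ringInverse]
    have h := hinv0.comp_hasDerivAt 0 hM
    simp at h
    exact h
  -- the linear map M ↦ Mᵀ *ᵥ v is continuous
  let φ : Matrix (Fin n) (Fin n) ℝ →ₗ[ℝ] EuclideanSpace ℝ (Fin n) :=
    { toFun := fun M => mulVecE Mᵀ v
      map_add' := fun M N => by
        simp [mulVecE, Matrix.transpose_add, Matrix.add_mulVec]
      map_smul' := fun c M => by
        simp [mulVecE, Matrix.transpose_smul, Matrix.smul_mulVec] }
  have hw : HasDerivAt (fun t : ℝ => mulVecE ((1 + t • A)⁻¹)ᵀ v) (mulVecE (-A)ᵀ v) 0 :=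
    φ.toContinuousLinearMap.hasFDerivAt.comp_hasDerivAt 0 hinv
  -- value at 0
  have hw0 : mulVecE ((1 + (0:ℝ) • A)⁻¹)ᵀ v = v := by
    simp [mulVecE]
  -- derivative of the norm squared
  have hnsq := hw.norm_sq
  -- derivative of the norm
  have hsq : ‖mulVecE ((1 + (0:ℝ) • A)⁻¹)ᵀ v‖ ^ 2 = 1 := by rw [hw0, hv]; norm_num
  have hnorm : HasDerivAt (fun t : ℝ => ‖mulVecE ((1 + t • A)⁻¹)ᵀ v‖)
      (-(inner ℝ v (mulVecE A v) : ℝ)) 0 := by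
    have hcomp := (Real.hasDerivAt_sqrt (x := ‖mulVecE ((1 + (0:ℝ) • A)⁻¹)ᵀ v‖ ^ 2)
        (by rw [hsq]; norm_num)).comp 0 hnsq
    have heq : (fun t : ℝ => Real.sqrt (‖mulVecE ((1 + t • A)⁻¹)ᵀ v‖ ^ 2))
        = fun t : ℝ => ‖mulVecE ((1 + t • A)⁻¹)ᵀ v‖ := by
      funext t; exact Real.sqrt_sq (norm_nonneg _)
    rw [Function.comp_def, heq] at hcomp
    refine hcomp.congr_deriv ?_
    rw [hsq, hw0]
    have hde : ∀ w : EuclideanSpace ℝ (Fin n), (inner ℝ v w : ℝ) = dotProduct v.ofLp w.ofLp := by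
      intro w
      simp [PiLp.inner_apply, dotProduct, mul_comm]
    have hip : (inner ℝ v (mulVecE (-A)ᵀ v) : ℝ) = -(inner ℝ v (mulVecE A v) : ℝ) := by
      simp only [mulVecE, hde, WithLp.ofLp_toLp]
      rw [Matrix.transpose_neg, Matrix.neg_mulVec, dotProduct_neg,
        dotProduct_mulVec, Matrix.vecMul_transpose, dotProduct_comm]
    rw [hip, Real.sqrt_one]
    ring
  have := hdet.mul hnorm
  simp only [hw0, hv] at this
  refine this.congr_deriv ?_
  simp only [show (1 + (0:ℝ) • A) = 1 by simp, Matrix.det_one]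
  ring
end

section
/- Let A be an n×n real matrix and let n⃗ ∈ ℝⁿ be a unit vector. The function t ↦ M(t) n⃗ / ‖M(t) n⃗‖, where M(t) := ((1 + t·A)⁻¹)ᵀ, defined for |t| small enough that 1 + t·A is invertible, is differentiable at t = 0 with derivative equal to −Aᵀ n⃗ + ⟨n⃗, A n⃗⟩ n⃗, which equals −(D_Γ)ᵀ n⃗ for the tangential matrix D_Γ := A − A n⃗ n⃗ᵀ. -/
open Matrix

/-- For a unit vector `n⃗`, the transported unit normal `t ↦ M(t)n⃗/‖M(t)n⃗‖` with
`M(t) = ((1 + t•A)⁻¹)ᵀ` is differentiable at `t = 0` with derivative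
`-Aᵀn⃗ + ⟪n⃗, An⃗⟫ n⃗`, which equals `-(D_Γ)ᵀ n⃗` for the tangential matrix
`D_Γ = A - A n⃗ n⃗ᵀ`. -/
theorem transported_normal_hasDerivAt (n : ℕ) (A : Matrix (Fin n) (Fin n) ℝ)
    (v : EuclideanSpace ℝ (Fin n)) (hv : ‖v‖ = 1) :
    HasDerivAt
      (fun t : ℝ =>
        ‖mulVecE ((1 + t • A)⁻¹)ᵀ v‖⁻¹ • mulVecE ((1 + t • A)⁻¹)ᵀ v)
      (-(mulVecE Aᵀ v) + (inner ℝ v (mulVecE A v) : ℝ) • v) 0 ∧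
    -(mulVecE Aᵀ v) + (inner ℝ v (mulVecE A v) : ℝ) • v
      = -(mulVecE (A - A * Matrix.vecMulVec v v)ᵀ v) := by
  classical
  letI : NormedRing (Matrix (Fin n) (Fin n) ℝ) := Matrix.linftyOpNormedRing
  letI : NormedAlgebra ℝ (Matrix (Fin n) (Fin n) ℝ) := Matrix.linftyOpNormedAlgebra
  -- the continuous linear map `M ↦ mulVecE Mᵀ v`
  let L : Matrix (Fin n) (Fin n) ℝ →ₗ[ℝ] EuclideanSpace ℝ (Fin n) :=
    { toFun := fun M => mulVecE Mᵀ v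
      map_add' := by
        intro M N
        ext i
        simp [mulVecE, Matrix.mulVec, dotProduct, Finset.sum_add_distrib, add_mul]
      map_smul' := by
        intro c M
        ext i
        simp [mulVecE, Matrix.mulVec, dotProduct, Finset.mul_sum, mul_assoc] }
  let Lc := L.toContinuousLinearMap
  -- derivative of `t ↦ 1 + t • A`
  have h1 : HasDerivAt (fun t : ℝ => 1 + t • A) A 0 := by
    exact (((hasDerivAt_id (0:ℝ)).smul_const A).const_add (1 : Matrix (Fin n) (Fin n) ℝ)).congr_deriv (one_smul ℝ A)
  -- derivative of matrix inverse at the identity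
  have h10 : (fun t : ℝ => 1 + t • A) 0 = ((1 : (Matrix (Fin n) (Fin n) ℝ)ˣ) : Matrix (Fin n) (Fin n) ℝ) := by
    simp
  have h2 : HasDerivAt (fun t : ℝ => Ring.inverse (1 + t • A)) (-A) 0 := by
    have := (hasFDerivAt_ringInverse (𝕜 := ℝ) (1 : (Matrix (Fin n) (Fin n) ℝ)ˣ)).comp_hasDerivAt_of_eq 0 h1 h10.symm
    simp at this; exact this
  have h3 : HasDerivAt (fun t : ℝ => (1 + t • A)⁻¹) (-A) 0 := by
    simpa only [Matrix.nonsing_inv_eq_ringInverse] using h2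
  -- derivative of `f t = mulVecE ((1 + t•A)⁻¹)ᵀ v`
  set f : ℝ → EuclideanSpace ℝ (Fin n) := fun t => mulVecE ((1 + t • A)⁻¹)ᵀ v with hf
  have hF : HasDerivAt f (-(mulVecE Aᵀ v)) 0 := by
    have := Lc.hasFDerivAt.comp_hasDerivAt 0 h3
    have he : Lc (-A) = -(mulVecE Aᵀ v) := by
      ext i
      simp [Lc, L, mulVecE, Matrix.mulVec, dotProduct]
    exact this.congr_deriv he
  have hf0 : f 0 = v := by
    have : ((1 : Matrix (Fin n) (Fin n) ℝ) + (0:ℝ) • A)⁻¹ = 1 := by simp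
    ext i
    simp [hf, this, mulVecE]
  -- inner ℝ product symmetry
  have hsym : (inner ℝ v (mulVecE Aᵀ v) : ℝ) = (inner ℝ v (mulVecE A v) : ℝ) := by
    simp only [mulVecE, PiLp.inner_apply, RCLike.inner_apply, starRingEnd_apply, star_trivial,
      Matrix.mulVec, dotProduct, Matrix.transpose_apply, Finset.mul_sum]
    simp only [Finset.sum_mul]; rw [Finset.sum_comm]
    apply Finset.sum_congr rfl; intro i _
    apply Finset.sum_congr rfl; intro j _
    ring
  -- derivative of `t ↦ ⟪f t, f t⟫`
  have hq : HasDerivAt (fun t => (inner ℝ (f t) (f t) : ℝ))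
      ((inner ℝ (f 0) (-(mulVecE Aᵀ v)) : ℝ) + (inner ℝ (-(mulVecE Aᵀ v)) (f 0) : ℝ)) 0 :=
    hF.inner ℝ hF
  have hq0 : (inner ℝ (f 0) (f 0) : ℝ) = 1 := by
    rw [hf0, real_inner_self_eq_norm_sq, hv]; norm_num
  have hqval : (inner ℝ (f 0) (-(mulVecE Aᵀ v)) : ℝ) + (inner ℝ (-(mulVecE Aᵀ v)) (f 0) : ℝ)
      = -(2 * (inner ℝ v (mulVecE A v) : ℝ)) := by
    have hsym' : (inner ℝ (mulVecE Aᵀ v) v : ℝ) = inner ℝ v (mulVecE A v) :=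
      (real_inner_comm _ _).trans hsym
    simp only [hf0, inner_neg_right, inner_neg_left, hsym, hsym']
    ring
  rw [hqval] at hq
  -- derivative of `t ↦ ‖f t‖ = sqrt ⟪f t, f t⟫`
  have hnorm_eq : ∀ t, ‖f t‖ = Real.sqrt (inner ℝ (f t) (f t) : ℝ) := by
    intro t
    rw [real_inner_self_eq_norm_sq, Real.sqrt_sq (norm_nonneg _)]
  have hsq : HasDerivAt (fun t => ‖f t‖)
      (-(2 * (inner ℝ v (mulVecE A v) : ℝ)) / (2 * Real.sqrt (inner ℝ (f 0) (f 0) : ℝ))) 0 := by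
    have := hq.sqrt (by rw [hq0]; norm_num)
    simpa only [← hnorm_eq] using this
  have hsqval : (-(2 * (inner ℝ v (mulVecE A v) : ℝ)) / (2 * Real.sqrt (inner ℝ (f 0) (f 0) : ℝ)))
      = -(inner ℝ v (mulVecE A v) : ℝ) := by
    rw [hq0, Real.sqrt_one]; ring
  rw [hsqval] at hsq
  -- derivative of `t ↦ ‖f t‖⁻¹`
  have hn0 : ‖f 0‖ = 1 := by rw [hf0, hv]
  have hinv : HasDerivAt (fun t => ‖f t‖⁻¹)
      (-(-(inner ℝ v (mulVecE A v) : ℝ)) / (‖f 0‖ ^ 2)) 0 :=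
    hsq.inv (by rw [hn0]; norm_num)
  have hinvval : (-(-(inner ℝ v (mulVecE A v) : ℝ)) / (‖f 0‖ ^ 2)) = (inner ℝ v (mulVecE A v) : ℝ) := by
    rw [hn0]; norm_num
  rw [hinvval] at hinv
  constructor
  · -- product rule
    have h := hinv.smul hF
    rw [hf0, hv] at h
    simp [hf, add_comm] at h ⊢; exact h
  · -- algebraic identity
    ext i
    simp only [mulVecE, PiLp.add_apply, PiLp.neg_apply, PiLp.smul_apply, smul_eq_mul,
      Matrix.mulVec, dotProduct, Matrix.transpose_apply, Matrix.sub_apply,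
      Matrix.mul_apply, Matrix.vecMulVec_apply, PiLp.inner_apply, RCLike.inner_apply,
      starRingEnd_apply, star_trivial, sub_mul, Finset.sum_sub_distrib, neg_sub,
      Finset.sum_mul, Finset.mul_sum]
    rw [neg_add_eq_sub]
    congr 1
    apply Finset.sum_congr rfl; intro a _
    apply Finset.sum_congr rfl; intro b _
    ring
end

section
/- Let Ω ⊆ ℝⁿ be a measurable set, f ∈ L¹(Ω), and let V : ℝⁿ → ℝⁿ be continuously differentiable with bounded derivative, i.e. sup_x ‖DV(x)‖ < ∞. Then the function t ↦ ∫_Ω f(x) · det(I + t·DV(x)) dx is differentiable at t = 0 with derivative ∫_Ω f(x) · div V(x) dx. -/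
open Matrix MeasureTheory

/-- The Jacobian matrix `DV(x)` of a vector field `V : ℝⁿ → ℝⁿ` at `x`. -/
noncomputable def jacM {n : ℕ} (V : (Fin n → ℝ) → (Fin n → ℝ)) (x : Fin n → ℝ) :
    Matrix (Fin n) (Fin n) ℝ :=
  LinearMap.toMatrix' (fderiv ℝ V x : (Fin n → ℝ) →ₗ[ℝ] (Fin n → ℝ))


/-- det of the matrix that takes rows from `M` on `S` and identity rows elsewhere. -/
noncomputable def pdet {n : ℕ} (S : Finset (Fin n)) (M : Matrix (Fin n) (Fin n) ℝ) : ℝ :=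
  Matrix.det (S.piecewise M (1 : Matrix (Fin n) (Fin n) ℝ))

lemma det_one_add_smul_expand {n : ℕ} (t : ℝ) (M : Matrix (Fin n) (Fin n) ℝ) :
    (1 + t • M).det = ∑ S : Finset (Fin n), t ^ S.card * pdet S M := by
  have key := (Matrix.detRowAlternating :
      (Fin n → ℝ) [⋀^Fin n]→ₗ[ℝ] ℝ).toMultilinearMap.map_add_univ
      (t • M) (1 : Matrix (Fin n) (Fin n) ℝ)
  have hterm : ∀ S : Finset (Fin n),
      (Matrix.detRowAlternating : (Fin n → ℝ) [⋀^Fin n]→ₗ[ℝ] ℝ).toMultilinearMap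
        (S.piecewise (t • M) (1 : Matrix (Fin n) (Fin n) ℝ))
      = t ^ S.card * pdet S M := by
    intro S
    have h2 := (Matrix.detRowAlternating :
        (Fin n → ℝ) [⋀^Fin n]→ₗ[ℝ] ℝ).toMultilinearMap.map_piecewise_smul
        (fun _ => t) (S.piecewise M (1 : Matrix (Fin n) (Fin n) ℝ)) S
    have heq : S.piecewise (fun i => t • (S.piecewise M (1 : Matrix (Fin n) (Fin n) ℝ)) i)
        (S.piecewise M (1 : Matrix (Fin n) (Fin n) ℝ))
        = S.piecewise (t • M) (1 : Matrix (Fin n) (Fin n) ℝ) := by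
      ext i j
      by_cases hi : i ∈ S <;>
        simp [Finset.piecewise_eq_of_mem, Finset.piecewise_eq_of_notMem, Finset.piecewise, hi]
    rw [heq] at h2
    simpa [pdet, Matrix.det, smul_eq_mul] using h2
  have h0 : (1 + t • M).det = (Matrix.detRowAlternating :
      (Fin n → ℝ) [⋀^Fin n]→ₗ[ℝ] ℝ).toMultilinearMap
      (t • M + (1 : Matrix (Fin n) (Fin n) ℝ)) := by
    rw [add_comm]; rfl
  refine h0.trans (key.trans ?_)
  exact Finset.sum_congr rfl fun S _ => hterm S

lemma hasDerivAt_det_one_add_smul {n : ℕ} (M : Matrix (Fin n) (Fin n) ℝ) :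
    HasDerivAt (fun t : ℝ => (1 + t • M).det) M.trace 0 := by
  set q := (Matrix.det (1 + (Polynomial.X : Polynomial ℝ) • M.map Polynomial.C)).divX.divX with hq
  have heq : (fun t : ℝ => (1 + t • M).det)
      = fun t : ℝ => 1 + M.trace * t + q.eval t * t ^ 2 :=
    funext fun t => Matrix.det_one_add_smul t M
  rw [heq]
  have h1 : HasDerivAt (fun t : ℝ => M.trace * t) M.trace 0 := by
    simpa using (hasDerivAt_id (0 : ℝ)).const_mul M.trace
  have h2 : HasDerivAt (fun t : ℝ => q.eval t * t ^ 2) 0 0 := by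
    simpa using (q.hasDerivAt (0 : ℝ)).fun_mul (hasDerivAt_pow 2 (0 : ℝ))
  simpa using ((hasDerivAt_const (0 : ℝ) (1 : ℝ)).fun_add h1).fun_add h2

lemma trace_eq_sum_pdet {n : ℕ} (M : Matrix (Fin n) (Fin n) ℝ) :
    M.trace = ∑ S : Finset (Fin n),
      ((S.card : ℝ) * (0 : ℝ) ^ (S.card - 1)) * pdet S M := by
  have h1 := hasDerivAt_det_one_add_smul M
  have h2 : HasDerivAt (fun t : ℝ => ∑ S : Finset (Fin n), t ^ S.card * pdet S M)
      (∑ S : Finset (Fin n),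
        ((S.card : ℝ) * (0 : ℝ) ^ (S.card - 1)) * pdet S M) 0 :=
    HasDerivAt.fun_sum fun S _ => (hasDerivAt_pow S.card 0).mul_const _
  have heq : (fun t : ℝ => (1 + t • M).det)
      = fun t : ℝ => ∑ S : Finset (Fin n), t ^ S.card * pdet S M :=
    funext fun t => det_one_add_smul_expand t M
  rw [heq] at h1
  exact h1.unique h2

/-- For `f ∈ L¹(Ω)` and a C¹ vector field `V` with bounded derivative, the map
`t ↦ ∫_Ω f(x) · det(I + t·DV(x)) dx` is differentiable at `t = 0` with derivative
`∫_Ω f(x) · div V(x) dx`, where `div V = trace(DV)`. -/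
theorem volume_integral_hasDerivAt_div (n : ℕ) (Ω : Set (Fin n → ℝ))
    (hΩ : MeasurableSet Ω) (f : (Fin n → ℝ) → ℝ) (hf : IntegrableOn f Ω)
    (V : (Fin n → ℝ) → (Fin n → ℝ)) (hV : ContDiff ℝ 1 V)
    (C : ℝ) (hC : ∀ x, ‖fderiv ℝ V x‖ ≤ C) :
    HasDerivAt (fun t : ℝ => ∫ x in Ω, f x * (1 + t • jacM V x).det)
      (∫ x in Ω, f x * (jacM V x).trace) 0 := by
  -- continuity of the Jacobian matrix field
  have hA : Continuous (jacM V) := by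
    have h1 : Continuous fun x => fderiv ℝ V x := hV.continuous_fderiv one_ne_zero
    have h2 : Continuous fun L : (Fin n → ℝ) →L[ℝ] (Fin n → ℝ) =>
        LinearMap.toMatrix' (L : (Fin n → ℝ) →ₗ[ℝ] (Fin n → ℝ)) :=
      LinearMap.continuous_of_finiteDimensional
        ((LinearMap.toMatrix'.toLinearMap).comp (ContinuousLinearMap.coeLM ℝ))
    exact h2.comp h1
  -- entries of the Jacobian are bounded by C
  have hent : ∀ x i j, jacM V x i j ∈ Set.Icc (-C) C := by
    intro x i j
    have hrw : jacM V x i j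
        = fderiv ℝ V x (fun l => if l = j then 1 else 0) i :=
      by rw [jacM, LinearMap.toMatrix'_apply, ContinuousLinearMap.coe_coe, show (Pi.single j 1 : Fin n → ℝ) = fun l => if l = j then 1 else 0 from funext fun l => by simp [Pi.single_apply]]
    have hu : ‖(fun l : Fin n => if l = j then (1 : ℝ) else 0)‖ ≤ 1 :=
      (pi_norm_le_iff_of_nonneg zero_le_one).mpr fun l => by
        dsimp; split <;> simp
    have hb : |jacM V x i j| ≤ C := by
      rw [hrw]
      calc |fderiv ℝ V x (fun l => if l = j then 1 else 0) i|
          ≤ ‖fderiv ℝ V x (fun l => if l = j then 1 else 0)‖ := by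
            simpa [Real.norm_eq_abs] using
              norm_le_pi_norm (fderiv ℝ V x fun l => if l = j then (1:ℝ) else 0) i
        _ ≤ ‖fderiv ℝ V x‖ * ‖(fun l : Fin n => if l = j then (1:ℝ) else 0)‖ :=
            (fderiv ℝ V x).le_opNorm _
        _ ≤ C * 1 :=
            mul_le_mul (hC x) hu (norm_nonneg _) (le_trans (norm_nonneg _) (hC x))
        _ = C := mul_one C
    exact Set.mem_Icc.mpr (abs_le.mp hb)
  -- compact set containing all Jacobians
  set K : Set (Matrix (Fin n) (Fin n) ℝ) :=
    Set.univ.pi fun _ => Set.univ.pi fun _ => Set.Icc (-C) C with hKdef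
  have hK : IsCompact K :=
    isCompact_univ_pi fun _ => isCompact_univ_pi fun _ => isCompact_Icc
  have hmemK : ∀ x, jacM V x ∈ K := by
    intro x
    rw [hKdef]
    exact Set.mem_univ_pi.mpr fun i => Set.mem_univ_pi.mpr fun j => hent x i j
  -- continuity and boundedness of the piecewise determinants
  have hpdet : ∀ S : Finset (Fin n), Continuous (pdet (n := n) S) := by
    intro S
    apply Continuous.matrix_det
    apply continuous_pi
    intro i
    have hite : Continuous fun M : Matrix (Fin n) (Fin n) ℝ =>
        (if i ∈ S then M i else (1 : Matrix (Fin n) (Fin n) ℝ) i) := by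
      by_cases hi : i ∈ S
      · simpa [hi] using (show Continuous fun M : Matrix (Fin n) (Fin n) ℝ => M i from continuous_apply (A := fun _ : Fin n => Fin n → ℝ) i)
      · simpa [hi] using continuous_const
    exact hite
  choose B hB using fun S : Finset (Fin n) =>
    hK.exists_bound_of_continuousOn (hpdet S).continuousOn
  -- integrability
  have hint : ∀ S : Finset (Fin n),
      IntegrableOn (fun x => f x * pdet S (jacM V x)) Ω := by
    intro S
    have h := hf.bdd_mul (((hpdet S).comp hA).aestronglyMeasurable)
      (ae_of_all _ fun x => hB S _ (hmemK x))
    simpa [mul_comm, IntegrableOn] using h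
  -- rewrite as a polynomial in t
  have hfun : (fun t : ℝ => ∫ x in Ω, f x * (1 + t • jacM V x).det)
      = fun t : ℝ => ∑ S : Finset (Fin n),
          t ^ S.card * ∫ x in Ω, f x * pdet S (jacM V x) := by
    funext t
    have hpt : ∀ x, f x * (1 + t • jacM V x).det
        = ∑ S : Finset (Fin n), t ^ S.card * (f x * pdet S (jacM V x)) := by
      intro x
      rw [det_one_add_smul_expand, Finset.mul_sum]
      exact Finset.sum_congr rfl fun S _ => by ring
    simp_rw [hpt]
    rw [integral_finset_sum _ fun S _ => (hint S).const_mul _]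
    exact Finset.sum_congr rfl fun S _ => integral_const_mul _ _
  have hval : (∫ x in Ω, f x * (jacM V x).trace)
      = ∑ S : Finset (Fin n), ((S.card : ℝ) * (0 : ℝ) ^ (S.card - 1))
          * ∫ x in Ω, f x * pdet S (jacM V x) := by
    have hpt : ∀ x, f x * (jacM V x).trace
        = ∑ S : Finset (Fin n),
            ((S.card : ℝ) * (0 : ℝ) ^ (S.card - 1)) * (f x * pdet S (jacM V x)) := by
      intro x
      rw [trace_eq_sum_pdet, Finset.mul_sum]
      exact Finset.sum_congr rfl fun S _ => by ring
    simp_rw [hpt]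
    rw [integral_finset_sum _ fun S _ => (hint S).const_mul _]
    exact Finset.sum_congr rfl fun S _ => integral_const_mul _ _
  rw [hfun, hval]
  exact HasDerivAt.fun_sum fun S _ => (hasDerivAt_pow S.card 0).mul_const _
end
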